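/- Let λ be a nonzero real number and let g : (0,∞) → ℂ be smooth with g(1) = 0. Define f on (0,∞) by f(ξ) = (i/λ)·g(ξ)/(ξ − 1) for ξ ≠ 1 and f(1) = (i/λ)·g′(1), so that f is smooth and f(ξ) = (i/λ)·∫₀¹ g′(1 + t(ξ−1)) dt. Then for every α ∈ ℕ and every ξ > 0, 𝒳^α f(ξ) = (i/λ)·∫₀¹ [ ((1 − (1−t)/η)·𝒳)^α g′ ](1 + t(ξ−1)) dt, where for each fixed t the expression ((1 − (1−t)/η)·𝒳)^α denotes the α-fold iterate of the operator sending h to the function η ↦ (1 − (1−t)/η)·(𝒳h)(η), applied to g′ and then evaluated at the point 1 + t(ξ−1). -/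

import Mathlib

open Complex intervalIntegral

/-- The operator `𝒳 f (ξ) = -2 ξ f'(ξ)`. -/
noncomputable def calX (f : ℝ → ℂ) : ℝ → ℂ := fun ξ => -2 * (ξ : ℂ) * deriv f ξ

section CalXAux

open Set Metric MeasureTheory Topology Filter Interval

private lemma inf_le' : ((⊤:ℕ∞) : WithTop ℕ∞) + 1 ≤ ((⊤:ℕ∞) : WithTop ℕ∞) := by
  exact_mod_cast (le_top : (⊤:ℕ∞) + 1 ≤ ⊤)

private lemma one_le_inf' : (1 : WithTop ℕ∞) ≤ ((⊤:ℕ∞) : WithTop ℕ∞) := by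
  exact_mod_cast (le_top : (1:ℕ∞) ≤ ⊤)

private lemma deriv_comp_affine (F : ℝ → ℂ) (t c x : ℝ) :
    deriv (fun y => F (t * y + c)) x = (t : ℂ) * deriv F (t * x + c) := by
  rcases eq_or_ne t 0 with rfl | ht
  · simp
  by_cases hd : DifferentiableAt ℝ F (t * x + c)
  · have h1 : HasDerivAt (fun y : ℝ => t * y + c) t x := by
      simpa using ((hasDerivAt_id x).const_mul t).add_const c
    have h2 : HasDerivAt (fun y => F (t * y + c)) (t • deriv F (t * x + c)) x :=
      (hd.hasDerivAt).scomp_of_eq x h1 (by ring)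
    rw [h2.deriv, Complex.real_smul]
  · have hnd : ¬ DifferentiableAt ℝ (fun y => F (t * y + c)) x := by
      intro hcomp
      apply hd
      have hinner : DifferentiableAt ℝ (fun z : ℝ => (z - c) / t) (t * x + c) :=
        (differentiableAt_id.sub_const c).div_const t
      have hx' : (t * x + c - c) / t = x := by field_simp; ring
      have h3 : DifferentiableAt ℝ ((fun y => F (t * y + c)) ∘ (fun z : ℝ => (z - c) / t))
          (t * x + c) := DifferentiableAt.comp _ (by rwa [hx']) hinner
      have h4 : ((fun y => F (t * y + c)) ∘ (fun z : ℝ => (z - c) / t)) = F := by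
        funext z
        simp only [Function.comp_apply]
        congr 1
        field_simp; ring
      rwa [h4] at h3
    rw [deriv_zero_of_not_differentiableAt hd, deriv_zero_of_not_differentiableAt hnd, mul_zero]

private lemma deriv_comp_affine' (F : ℝ → ℂ) (t x : ℝ) :
    deriv (fun y => F (1 + t * (y - 1))) x = (t : ℂ) * deriv F (1 + t * (x - 1)) := by
  have h : (fun y => F (1 + t * (y - 1))) = fun y => F (t * y + (1 - t)) := by
    funext y; congr 1; ring
  rw [h, deriv_comp_affine]
  congr 2
  ring

private lemma partial2_hasDerivAt {F : ℝ × ℝ → ℂ} {U : Set (ℝ × ℝ)} (hU : IsOpen U)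
    (hF : ContDiffOn ℝ (⊤:ℕ∞) F U) {p : ℝ × ℝ} (hp : p ∈ U) :
    HasDerivAt (fun x => F (p.1, x)) (fderiv ℝ F p ((0 : ℝ), (1 : ℝ))) p.2 := by
  have hdiff : DifferentiableAt ℝ F p :=
    (hF.contDiffAt (hU.mem_nhds hp)).differentiableAt (by simp)
  have hg : HasDerivAt (fun x : ℝ => (p.1, x)) ((0 : ℝ), (1 : ℝ)) p.2 :=
    HasDerivAt.prodMk (hasDerivAt_const _ _) (hasDerivAt_id _)
  have := (hdiff.hasFDerivAt).comp_hasDerivAt p.2 (by simpa using hg)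
  exact this

private lemma contDiffOn_partial2 {F : ℝ × ℝ → ℂ} {U : Set (ℝ × ℝ)} (hU : IsOpen U)
    (hF : ContDiffOn ℝ (⊤:ℕ∞) F U) :
    ContDiffOn ℝ (⊤:ℕ∞) (fun p : ℝ × ℝ => deriv (fun x => F (p.1, x)) p.2) U := by
  have h1 : ContDiffOn ℝ (⊤:ℕ∞) (fun p => fderiv ℝ F p) U := hF.fderiv_of_isOpen hU inf_le'
  have h2 : ContDiffOn ℝ (⊤:ℕ∞) (fun p => fderiv ℝ F p ((0 : ℝ), (1 : ℝ))) U :=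
    h1.clm_apply contDiffOn_const
  exact h2.congr fun p hp => (partial2_hasDerivAt hU hF hp).deriv

private noncomputable def Hf (g : ℝ → ℂ) (α : ℕ) (t x : ℝ) : ℂ :=
  calX^[α] (fun y => deriv g (1 + t * (y - 1))) x

private def Uset : Set (ℝ × ℝ) := {p | 0 < p.2 ∧ 0 < 1 + p.1 * (p.2 - 1)}

private lemma isOpen_Uset : IsOpen Uset := by
  have h1 : IsOpen {p : ℝ × ℝ | 0 < p.2} := isOpen_lt continuous_const continuous_snd
  have h2 : IsOpen {p : ℝ × ℝ | 0 < 1 + p.1 * (p.2 - 1)} :=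
    isOpen_lt continuous_const (by fun_prop)
  exact h1.inter h2

private lemma mem_Uset {t x : ℝ} (ht0 : 0 ≤ t) (ht1 : t ≤ 1) (hx : 0 < x) : (t, x) ∈ Uset :=
  ⟨hx, by nlinarith [mul_nonneg ht0 hx.le]⟩

private lemma Hf_succ (g : ℝ → ℂ) (n : ℕ) (t x : ℝ) :
    Hf g (n + 1) t x = -2 * (x : ℂ) * deriv (fun y => Hf g n t y) x := by
  rw [Hf, Function.iterate_succ_apply']
  rfl

private lemma contDiffOn_Hf {g : ℝ → ℂ} (hg : ContDiffOn ℝ (⊤:ℕ∞) g (Ioi 0)) (α : ℕ) :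
    ContDiffOn ℝ (⊤:ℕ∞) (fun p : ℝ × ℝ => Hf g α p.1 p.2) Uset := by
  induction α with
  | zero =>
    have hdg : ContDiffOn ℝ (⊤:ℕ∞) (deriv g) (Ioi 0) := hg.deriv_of_isOpen isOpen_Ioi inf_le'
    have hφ : ContDiff ℝ (⊤:ℕ∞) (fun p : ℝ × ℝ => 1 + p.1 * (p.2 - 1)) := by fun_prop
    exact hdg.comp hφ.contDiffOn fun p hp => hp.2
  | succ n ih =>
    have key := contDiffOn_partial2 isOpen_Uset ih
    have heq : (fun p : ℝ × ℝ => Hf g (n + 1) p.1 p.2)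
        = fun p : ℝ × ℝ => -2 * (p.2 : ℂ) * deriv (fun x => Hf g n p.1 x) p.2 := by
      funext p; exact Hf_succ g n p.1 p.2
    rw [heq]
    have hc : ContDiffOn ℝ (⊤:ℕ∞) (fun p : ℝ × ℝ => -2 * (p.2 : ℂ)) Uset :=
      (contDiff_const.mul (Complex.ofRealCLM.contDiff.comp contDiff_snd)).contDiffOn
    exact hc.mul key

private lemma slice_cont {G : ℝ × ℝ → ℂ} (hG : ContinuousOn G Uset) {x : ℝ} (hx : 0 < x) :
    ContinuousOn (fun t => G (t, x)) (Icc 0 1) := by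
  apply hG.comp (Continuous.continuousOn (by fun_prop))
  intro t ht
  exact mem_Uset ht.1 ht.2 hx

private lemma slice_aesm {G : ℝ × ℝ → ℂ} (hG : ContinuousOn G Uset) {x : ℝ} (hx : 0 < x) :
    AEStronglyMeasurable (fun t => G (t, x)) (volume.restrict (Ι (0:ℝ) 1)) := by
  rw [uIoc_of_le (by norm_num : (0:ℝ) ≤ 1)]
  exact ((slice_cont hG hx).mono Ioc_subset_Icc_self).aestronglyMeasurable measurableSet_Ioc

private lemma hasDerivAt_Hf {g : ℝ → ℂ} (hg : ContDiffOn ℝ (⊤:ℕ∞) g (Ioi 0)) (n : ℕ)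
    {t x : ℝ} (hp : (t, x) ∈ Uset) :
    HasDerivAt (fun y => Hf g n t y) (deriv (fun y => Hf g n t y) x) x := by
  have h : HasDerivAt (fun y => Hf g n t y)
      (fderiv ℝ (fun p : ℝ × ℝ => Hf g n p.1 p.2) (t, x) ((0:ℝ), (1:ℝ))) x :=
    partial2_hasDerivAt isOpen_Uset (contDiffOn_Hf hg n) hp
  rwa [h.deriv]

private lemma keyP {lam : ℝ} (hlam : lam ≠ 0) {g : ℝ → ℂ}
    (hg : ContDiffOn ℝ (⊤ : ℕ∞) g (Set.Ioi (0 : ℝ))) (hg1 : g 1 = 0)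
    {f : ℝ → ℂ}
    (hf : ∀ ξ : ℝ, ξ ≠ 1 → f ξ = Complex.I / (lam : ℂ) * g ξ / ((ξ : ℂ) - 1))
    (hf1 : f 1 = Complex.I / (lam : ℂ) * deriv g 1) :
    ∀ (α : ℕ) (ξ : ℝ), 0 < ξ →
      calX^[α] f ξ = Complex.I / (lam : ℂ) * ∫ t in (0:ℝ)..1, Hf g α t ξ := by
  intro α
  induction α with
  | zero =>
    intro ξ hξ
    simp only [Function.iterate_zero_apply, Hf]
    rcases eq_or_ne ξ 1 with rfl | hne
    · simp [hf1]
    · have hsub : ξ - 1 ≠ 0 := sub_ne_zero.mpr hne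
      have hicc : uIcc (1:ℝ) ξ ⊆ Ioi 0 := fun x hx =>
        lt_of_lt_of_le (lt_min one_pos hξ) hx.1
      have hftc : ∫ s in (1:ℝ)..ξ, deriv g s = g ξ - g 1 := by
        apply intervalIntegral.integral_deriv_eq_sub
        · intro x hx
          exact (hg.contDiffAt (isOpen_Ioi.mem_nhds (hicc hx))).differentiableAt
            (by simp)
        · exact (((hg.deriv_of_isOpen isOpen_Ioi inf_le').continuousOn).mono
            hicc).intervalIntegrable
      have hcv : (∫ t in (0:ℝ)..1, deriv g (1 + t * (ξ - 1)))
          = (ξ - 1)⁻¹ • ∫ s in (1:ℝ)..ξ, deriv g s := by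
        have harg : ∀ t : ℝ, 1 + t * (ξ - 1) = (ξ - 1) * t + 1 := fun t => by ring
        simp_rw [harg]
        rw [intervalIntegral.integral_comp_mul_add (deriv g) hsub 1]
        norm_num
      rw [hcv, hftc, hg1, sub_zero, hf ξ hne, Complex.real_smul]
      push_cast
      have hsubC : (ξ:ℂ) - 1 ≠ 0 := by
        rw [sub_ne_zero]
        exact_mod_cast hne
      field_simp
  | succ n ih =>
    intro ξ hξ
    set D : ℝ → ℝ → ℂ := fun t x => deriv (fun y => Hf g n t y) x with hD
    have hcontJ : ContinuousOn (fun p : ℝ × ℝ => Hf g n p.1 p.2) Uset :=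
      (contDiffOn_Hf hg n).continuousOn
    have hcontD : ContinuousOn (fun p : ℝ × ℝ => D p.1 p.2) Uset :=
      (contDiffOn_partial2 isOpen_Uset (contDiffOn_Hf hg n)).continuousOn
    have hεpos : (0:ℝ) < ξ / 2 := by linarith
    obtain ⟨C, hC⟩ : ∃ C, ∀ p ∈ (Icc (0:ℝ) 1 ×ˢ Icc (ξ/2) (ξ + ξ)), ‖D p.1 p.2‖ ≤ C := by
      apply (isCompact_Icc.prod isCompact_Icc).exists_bound_of_continuousOn
      apply hcontD.mono
      rintro ⟨t, x⟩ ⟨ht, hx⟩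
      exact mem_Uset ht.1 ht.2 (lt_of_lt_of_le hεpos hx.1)
    have hball : ∀ x ∈ ball ξ (ξ/2), x ∈ Icc (ξ/2) (ξ + ξ) := by
      intro x hx
      rw [mem_ball, Real.dist_eq, abs_lt] at hx
      constructor <;> linarith [hx.1, hx.2]
    have hballpos : ∀ x ∈ ball ξ (ξ/2), (0:ℝ) < x := fun x hx =>
      lt_of_lt_of_le hεpos (hball x hx).1
    have hmemU : ∀ t ∈ Ι (0:ℝ) 1, ∀ x ∈ ball ξ (ξ/2), (t, x) ∈ Uset := by
      intro t ht x hx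
      rw [uIoc_of_le (by norm_num : (0:ℝ) ≤ 1)] at ht
      exact mem_Uset ht.1.le ht.2 (hballpos x hx)
    have key := intervalIntegral.hasDerivAt_integral_of_dominated_loc_of_deriv_le
      (F := fun x t => Hf g n t x) (F' := fun x t => D t x) (x₀ := ξ) (a := 0) (b := 1)
      (μ := volume) (bound := fun _ => C) (ball_mem_nhds ξ hεpos)
      ?_ ?_ ?_ ?_ ?_ ?_
    · obtain ⟨-, hderiv⟩ := key
      have heq : calX^[n] f =ᶠ[𝓝 ξ]
          (fun x => Complex.I / (lam : ℂ) * ∫ t in (0:ℝ)..1, Hf g n t x) := by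
        filter_upwards [isOpen_Ioi.mem_nhds hξ] with x hx using ih x hx
      have hDf : HasDerivAt (fun x => Complex.I / (lam : ℂ) * ∫ t in (0:ℝ)..1, Hf g n t x)
          (Complex.I / (lam : ℂ) * ∫ t in (0:ℝ)..1, D t ξ) ξ := hderiv.const_mul _
      calc calX^[n+1] f ξ = -2 * (ξ:ℂ) * deriv (calX^[n] f) ξ := by
            rw [Function.iterate_succ_apply']; rfl
        _ = -2 * (ξ:ℂ) * (Complex.I / (lam : ℂ) * ∫ t in (0:ℝ)..1, D t ξ) := by
            rw [heq.deriv_eq, hDf.deriv]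
        _ = Complex.I / (lam : ℂ) * ∫ t in (0:ℝ)..1, (-2 * (ξ:ℂ) * D t ξ) := by
            rw [intervalIntegral.integral_const_mul]; ring
        _ = Complex.I / (lam : ℂ) * ∫ t in (0:ℝ)..1, Hf g (n+1) t ξ := by
            congr 1
            apply intervalIntegral.integral_congr
            intro t ht
            exact (Hf_succ g n t ξ).symm
    · filter_upwards [ball_mem_nhds ξ hεpos] with x hx
      exact slice_aesm hcontJ (hballpos x hx)
    · apply ContinuousOn.intervalIntegrable
      rw [uIcc_of_le (by norm_num : (0:ℝ) ≤ 1)]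
      exact slice_cont hcontJ hξ
    · exact slice_aesm hcontD hξ
    · apply Eventually.of_forall
      intro t ht x hx
      exact hC (t, x) ⟨⟨(by rw [uIoc_of_le (by norm_num : (0:ℝ) ≤ 1)] at ht; exact ht.1.le),
        (by rw [uIoc_of_le (by norm_num : (0:ℝ) ≤ 1)] at ht; exact ht.2)⟩, hball x hx⟩
    · exact intervalIntegrable_const
    · apply Eventually.of_forall
      intro t ht x hx
      exact hasDerivAt_Hf hg n (hmemU t ht x hx)

private lemma lemA (h : ℝ → ℂ) (t : ℝ) (α : ℕ) :
    ∀ x : ℝ, 0 < 1 + t * (x - 1) →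
      ((fun k : ℝ → ℂ => fun η : ℝ =>
          (1 - (1 - (t : ℂ)) / (η : ℂ)) * calX k η)^[α] h) (1 + t * (x - 1))
        = calX^[α] (fun y => h (1 + t * (y - 1))) x := by
  induction α with
  | zero => intro x hx; rfl
  | succ n ih =>
    intro x hx
    rw [Function.iterate_succ_apply', Function.iterate_succ_apply']
    have hne : ((1 + t * (x - 1) : ℝ) : ℂ) ≠ 0 := by
      exact_mod_cast ne_of_gt hx
    have hopen : IsOpen {y : ℝ | 0 < 1 + t * (y - 1)} :=
      isOpen_lt continuous_const (by fun_prop)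
    have heq : calX^[n] (fun y => h (1 + t * (y - 1))) =ᶠ[𝓝 x]
        (fun y => ((fun k : ℝ → ℂ => fun η : ℝ =>
          (1 - (1 - (t : ℂ)) / (η : ℂ)) * calX k η)^[n] h) (1 + t * (y - 1))) := by
      filter_upwards [hopen.mem_nhds hx] with y hy using (ih y hy).symm
    have calX_apply : ∀ (F : ℝ → ℂ) (z : ℝ), calX F z = -2 * (z : ℂ) * deriv F z :=
      fun _ _ => rfl
    show (1 - (1 - (t : ℂ)) / ((1 + t * (x - 1) : ℝ) : ℂ)) *
        calX ((fun k : ℝ → ℂ => fun η : ℝ =>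
          (1 - (1 - (t : ℂ)) / (η : ℂ)) * calX k η)^[n] h) (1 + t * (x - 1)) = _
    rw [calX_apply, calX_apply, heq.deriv_eq, deriv_comp_affine']
    push_cast at hne ⊢
    field_simp
    ring

end CalXAux

/-- Integral formula for `𝒳^α f` where `f(ξ) = (i/λ)·g(ξ)/(ξ−1)` (extended at `ξ = 1` by
`f(1) = (i/λ)·g′(1)`), for `g` smooth on `(0,∞)` with `g(1) = 0`:
`𝒳^α f(ξ) = (i/λ)·∫₀¹ [((1 − (1−t)/η)·𝒳)^α g′](1 + t(ξ−1)) dt`. -/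
theorem calX_iterate_integral_formula (lam : ℝ) (hlam : lam ≠ 0)
    (g : ℝ → ℂ) (hg : ContDiffOn ℝ (⊤ : ℕ∞) g (Set.Ioi (0 : ℝ))) (hg1 : g 1 = 0)
    (f : ℝ → ℂ)
    (hf : ∀ ξ : ℝ, ξ ≠ 1 → f ξ = Complex.I / (lam : ℂ) * g ξ / ((ξ : ℂ) - 1))
    (hf1 : f 1 = Complex.I / (lam : ℂ) * deriv g 1) :
    ∀ (α : ℕ) (ξ : ℝ), 0 < ξ →
      calX^[α] f ξ =
        Complex.I / (lam : ℂ) *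
          ∫ t in (0 : ℝ)..1,
            ((fun h : ℝ → ℂ => fun η : ℝ =>
                (1 - (1 - (t : ℂ)) / (η : ℂ)) * calX h η)^[α] (deriv g))
              (1 + t * (ξ - 1)) := by
  intro α ξ hξ
  rw [keyP hlam hg hg1 hf hf1 α ξ hξ]
  congr 1
  apply intervalIntegral.integral_congr
  intro t ht
  rw [Set.uIcc_of_le (by norm_num : (0:ℝ) ≤ 1)] at ht
  have h1 : 0 ≤ t * ξ := mul_nonneg ht.1 hξ.le
  have h2 : 0 ≤ (1 - t) * ξ := mul_nonneg (by linarith [ht.2]) hξ.le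
  have hpos : 0 < 1 + t * (ξ - 1) := by nlinarith [ht.1, ht.2]
  exact (lemA (deriv g) t α ξ hpos).symm
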